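/- Let f : ℕ → ℕ → ℕ be defined by f(0,h) = 0 for all h, f(n,0) = 1 for all n ≥ 1, and f(n,h) = f(n,h-1) + f(⌊n/2⌋,h) + f(n-1-⌊n/2⌋,h) for all n,h ≥ 1. Then for all n ≥ 1 and h ≥ 1, f(n,h) = (∑_{i=0}^{⌊log₂ n⌋ - 1} 2^i · C(h-1+i, h-1)) + (n - 2^{⌊log₂ n⌋} + 1) · C(h-1+⌊log₂ n⌋, h-1), where C(a,b) denotes the binomial coefficient and ⌊log₂ n⌋ is the floor of the base-2 logarithm of n. -/

import Mathlib

open Finset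

private def bb (n i : ℕ) : ℕ := min (2 ^ i) (n + 1 - 2 ^ i)

private def gg (n h : ℕ) : ℕ :=
  ∑ i ∈ range (n + 1), bb n i * Nat.choose (h - 1 + i) (h - 1)

private lemma bb_zero {n i : ℕ} (h : n < 2 ^ i) : bb n i = 0 := by
  unfold bb; omega

private lemma gg_pad (n h K : ℕ) (hK : n + 1 ≤ K) :
    ∑ i ∈ range K, bb n i * Nat.choose (h - 1 + i) (h - 1) = gg n h := by
  rw [gg]
  symm
  apply Finset.sum_subset
  · intro x hx; simp only [Finset.mem_range] at *; omega
  · intro x hx hx'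
    simp only [Finset.mem_range] at hx hx'
    have hnx : n < x := by omega
    have : n < 2 ^ x := lt_of_lt_of_le hnx (le_of_lt (Nat.lt_two_pow_self (n := x)))
    rw [bb_zero this, zero_mul]

private lemma bb_split (n i : ℕ) (hn : 1 ≤ n) :
    bb (n / 2) i + bb (n - 1 - n / 2) i = bb n (i + 1) := by
  unfold bb
  have h1 : 1 ≤ 2 ^ i := Nat.one_le_two_pow
  rw [pow_succ]
  omega

private lemma bb_sum (n K : ℕ) : ∑ i ∈ range K, bb n i = min n (2 ^ K - 1) := by
  induction K with
  | zero => simp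
  | succ K ih =>
    rw [Finset.sum_range_succ, ih]
    have h1 : 1 ≤ 2 ^ K := Nat.one_le_two_pow
    unfold bb
    rw [pow_succ]
    omega

private lemma gg_one (n : ℕ) : gg n 1 = n := by
  have h1 : n < 2 ^ (n + 1) :=
    lt_of_lt_of_le (Nat.lt_two_pow_self (n := n)) (Nat.pow_le_pow_right (by norm_num) (by omega))
  simp only [gg, Nat.sub_self, Nat.zero_add, Nat.choose_zero_right, mul_one]
  rw [bb_sum]
  omega

private lemma gg_zero (h : ℕ) : gg 0 h = 0 := by
  simp [gg, bb]

private lemma gg_rec (n h : ℕ) (hn : 1 ≤ n) (hh : 2 ≤ h) :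
    gg n h = gg n (h - 1) + gg (n / 2) h + gg (n - 1 - n / 2) h := by
  obtain ⟨k, rfl⟩ : ∃ k, h = k + 2 := ⟨h - 2, by omega⟩
  have hch : ∀ i, Nat.choose (k + 2 - 1 + i) (k + 2 - 1) =
      Nat.choose (k + i) k + Nat.choose (k + i) (k + 1) := by
    intro i
    have : k + 2 - 1 + i = (k + i) + 1 := by omega
    rw [this]
    have : k + 2 - 1 = k + 1 := by omega
    rw [this, Nat.choose_succ_succ]
  have step1 : gg n (k + 2) = gg n (k + 1) +
      ∑ i ∈ range (n + 1), bb n i * Nat.choose (k + i) (k + 1) := by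
    rw [gg, gg]
    rw [← Finset.sum_add_distrib]
    apply Finset.sum_congr rfl
    intro i _
    rw [hch i]
    have : k + 1 - 1 = k := by omega
    rw [this, Nat.mul_add]
  rw [step1]
  have step2 : ∑ i ∈ range (n + 1), bb n i * Nat.choose (k + i) (k + 1)
      = gg (n / 2) (k + 2) + gg (n - 1 - n / 2) (k + 2) := by
    rw [Finset.sum_range_succ']
    have h0 : bb n 0 * Nat.choose (k + 0) (k + 1) = 0 := by
      rw [Nat.choose_eq_zero_of_lt (by omega), mul_zero]
    rw [h0, add_zero]
    have : ∀ i ∈ range n, bb n (i + 1) * Nat.choose (k + (i + 1)) (k + 1)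
        = bb (n / 2) i * Nat.choose (k + 2 - 1 + i) (k + 2 - 1)
          + bb (n - 1 - n / 2) i * Nat.choose (k + 2 - 1 + i) (k + 2 - 1) := by
      intro i _
      rw [← bb_split n i hn, add_mul]
      have e1 : k + (i + 1) = k + 2 - 1 + i := by omega
      have e2 : k + 1 = k + 2 - 1 := by omega
      rw [e1, e2]
    rw [Finset.sum_congr rfl this, Finset.sum_add_distrib]
    rw [gg_pad (n / 2) (k + 2) n (by omega), gg_pad (n - 1 - n / 2) (k + 2) n (by omega)]
  rw [step2]
  have e : k + 2 - 1 = k + 1 := by omega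
  rw [e]
  ring

private lemma f_eq_gg (f : ℕ → ℕ → ℕ)
    (hf0 : ∀ h, f 0 h = 0)
    (hfn0 : ∀ n, 1 ≤ n → f n 0 = 1)
    (hrec : ∀ n h, 1 ≤ n → 1 ≤ h →
      f n h = f n (h - 1) + f (n / 2) h + f (n - 1 - n / 2) h) :
    ∀ m n h, n + h = m → 1 ≤ h → f n h = gg n h := by
  intro m
  induction m using Nat.strong_induction_on with
  | _ m ih =>
    intro n h hm hh
    rcases Nat.eq_zero_or_pos n with h0 | hn
    · subst h0; rw [hf0, gg_zero]
    · rcases eq_or_lt_of_le hh with h1 | h2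
      · -- h = 1
        subst hm
        rw [← h1]
        have hd2 : n / 2 < n := Nat.div_lt_self hn (by norm_num)
        rw [hrec n 1 hn le_rfl, hfn0 n hn]
        rw [ih (n / 2 + 1) (by omega) (n / 2) 1 rfl le_rfl,
            ih (n - 1 - n / 2 + 1) (by omega) (n - 1 - n / 2) 1 rfl le_rfl]
        rw [gg_one, gg_one, gg_one]
        omega
      · -- h ≥ 2
        subst hm
        have hd2 : n / 2 < n := Nat.div_lt_self hn (by norm_num)
        rw [hrec n h hn (by omega)]
        rw [ih (n + (h - 1)) (by omega) n (h - 1) rfl (by omega),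
            ih (n / 2 + h) (by omega) (n / 2) h rfl (by omega),
            ih (n - 1 - n / 2 + h) (by omega) (n - 1 - n / 2) h rfl (by omega)]
        rw [← gg_rec n h hn h2]

private lemma gg_closed (n h : ℕ) (hn : 1 ≤ n) :
    gg n h = (∑ i ∈ Finset.range (Nat.log 2 n), 2 ^ i * Nat.choose (h - 1 + i) (h - 1))
      + (n - 2 ^ Nat.log 2 n + 1) * Nat.choose (h - 1 + Nat.log 2 n) (h - 1) := by
  set L := Nat.log 2 n with hL
  have hL1 : 2 ^ L ≤ n := Nat.pow_log_le_self 2 (by omega)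
  have hL2 : n < 2 ^ (L + 1) := Nat.lt_pow_succ_log_self (by norm_num) n
  have hLn : L < n := lt_of_lt_of_le (Nat.lt_two_pow_self (n := L)) hL1
  have htrunc : gg n h = ∑ i ∈ range (L + 1), bb n i * Nat.choose (h - 1 + i) (h - 1) := by
    rw [gg]
    symm
    apply Finset.sum_subset
    · intro x hx; simp only [Finset.mem_range] at *; omega
    · intro x hx hx'
      simp only [Finset.mem_range] at hx hx'
      have : n < 2 ^ x :=
        lt_of_lt_of_le hL2 (Nat.pow_le_pow_right (by norm_num) (by omega))
      rw [bb_zero this, zero_mul]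
  rw [htrunc, Finset.sum_range_succ]
  have hlast : bb n L = n - 2 ^ L + 1 := by
    unfold bb
    have : 2 ^ (L + 1) = 2 * 2 ^ L := by rw [pow_succ]; ring
    omega
  rw [hlast]
  congr 1
  apply Finset.sum_congr rfl
  intro i hi
  simp only [Finset.mem_range] at hi
  have h2i : 2 ^ (i + 1) ≤ 2 ^ L := Nat.pow_le_pow_right (by norm_num) (by omega)
  have : bb n i = 2 ^ i := by
    unfold bb
    have : 2 ^ (i + 1) = 2 * 2 ^ i := by rw [pow_succ]; ring
    omega
  rw [this]

theorem stmt_0 (f : ℕ → ℕ → ℕ)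
    (hf0 : ∀ h, f 0 h = 0)
    (hfn0 : ∀ n, 1 ≤ n → f n 0 = 1)
    (hrec : ∀ n h, 1 ≤ n → 1 ≤ h →
      f n h = f n (h - 1) + f (n / 2) h + f (n - 1 - n / 2) h) :
    ∀ n h, 1 ≤ n → 1 ≤ h →
      f n h = (∑ i ∈ Finset.range (Nat.log 2 n), 2 ^ i * Nat.choose (h - 1 + i) (h - 1))
        + (n - 2 ^ Nat.log 2 n + 1) * Nat.choose (h - 1 + Nat.log 2 n) (h - 1) := by
  intro n h hn hh
  rw [f_eq_gg f hf0 hfn0 hrec (n + h) n h rfl hh, gg_closed n h hn]
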